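/- Let R be a commutative ring, G a group, and H, K subgroups of G. Then the permutation module R[G/K], viewed as an RH-module by restriction, is isomorphic to the direct sum over double coset representatives g ∈ H\G/K of the permutation modules R[H/(H ∩ gKg⁻¹)]. -/

import Mathlib

open DirectSum

section Aux

variable {G : Type*} [Group G] (H K : Subgroup G)

private def dcSt (t : G) : Subgroup H :=
  (K.map (MulAut.conj t).toMonoidHom).subgroupOf H

private lemma dcSt_mem (t : G) (h : H) :
    h ∈ dcSt H K t ↔ t⁻¹ * h * t ∈ K := by
  simp only [dcSt, Subgroup.mem_subgroupOf, Subgroup.mem_map, MulEquiv.coe_toMonoidHom,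
    MulAut.conj_apply]
  constructor
  · rintro ⟨k, hk, hh⟩
    have : t⁻¹ * (t * k * t⁻¹) * t = k := by group
    rw [← hh, this]
    exact hk
  · intro hk
    exact ⟨t⁻¹ * h * t, hk, by group⟩

private def dcPsi (t : G) : H ⧸ dcSt H K t → G ⧸ K :=
  Quotient.map' (fun h : H => (h : G) * t) (by
    intro a b hab
    rw [QuotientGroup.leftRel_apply] at hab ⊢
    rw [dcSt_mem] at hab
    have : ((a : G) * t)⁻¹ * ((b : G) * t) = t⁻¹ * ((a⁻¹ * b : H) : G) * t := by
      push_cast; group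
    show ((a : G) * t)⁻¹ * ((b : G) * t) ∈ K
    rw [this]
    exact hab)

private lemma dcPsi_mk (t : G) (h : H) :
    dcPsi H K t (QuotientGroup.mk h) = QuotientGroup.mk ((h : G) * t) := rfl

private lemma dcPsi_smul (t : G) (h : H) (y : H ⧸ dcSt H K t) :
    dcPsi H K t (h • y) = (h : G) • dcPsi H K t y := by
  induction y using QuotientGroup.induction_on with
  | H a =>
    show dcPsi H K t (QuotientGroup.mk (h * a)) = _
    rw [dcPsi_mk, dcPsi_mk]
    have : ((h * a : H) : G) * t = (h : G) * ((a : G) * t) := by push_cast; group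
    rw [this]
    rfl

private lemma mapDomain_smul_apply {R α Γ : Type*} [CommRing R] [Group Γ] [MulAction Γ α]
    (γ : Γ) (w : α →₀ R) (b : α) :
    Finsupp.mapDomain (fun x => γ • x) w b = w (γ⁻¹ • b) := by
  have := Finsupp.mapDomain_apply (MulAction.injective γ) w (γ⁻¹ • b)
  simpa using this

end Aux

/-- The permutation module `R[G/K]`, restricted to `RH`, is isomorphic to the
direct sum over double coset representatives `t ∈ H\G/K` of the permutation modules
`R[H/(H ∩ tKt⁻¹)]`, `H`-equivariantly. -/
theorem stmt_3 (R : Type*) [CommRing R] {G : Type*} [Group G] (H K : Subgroup G) :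
    ∃ T : Set G,
      (∀ g : G, ∃ t ∈ T, ∃ h ∈ H, ∃ k ∈ K, g = h * t * k) ∧
      (∀ t ∈ T, ∀ t' ∈ T, (∃ h ∈ H, ∃ k ∈ K, t' = h * t * k) → t' = t) ∧
      ∃ e : (G ⧸ K →₀ R) ≃ₗ[R]
          (⨁ t : T, (H ⧸ ((K.map (MulAut.conj (t : G)).toMonoidHom).subgroupOf H) →₀ R)),
        ∀ (h : H) (v : G ⧸ K →₀ R) (t : T),
          e (Finsupp.mapDomain (fun x => (h : G) • x) v) t
            = Finsupp.mapDomain (fun y => h • y) (e v t) := by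
  classical
  set T : Set G :=
    Set.range (fun q : DoubleCoset.Quotient (H : Set G) (K : Set G) => Quotient.out q) with hT
  have hcover : ∀ g : G, ∃ t ∈ T, ∃ h ∈ H, ∃ k ∈ K, g = h * t * k := by
    intro g
    refine ⟨(DoubleCoset.mk H K g).out, ⟨_, rfl⟩, ?_⟩
    exact (DoubleCoset.eq H K _ g).1 (DoubleCoset.out_eq' H K (DoubleCoset.mk H K g))
  have huniq : ∀ t ∈ T, ∀ t' ∈ T, (∃ h ∈ H, ∃ k ∈ K, t' = h * t * k) → t' = t := by
    rintro t ⟨q, rfl⟩ t' ⟨q', rfl⟩ hrel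
    have h1 : DoubleCoset.mk H K (Quotient.out q) = DoubleCoset.mk H K (Quotient.out q') :=
      (DoubleCoset.eq H K _ _).2 hrel
    rw [DoubleCoset.out_eq', DoubleCoset.out_eq'] at h1
    rw [h1]
  refine ⟨T, hcover, huniq, ?_⟩
  -- the H-equivariant bijection on bases
  let ψ : (Σ t : T,
      H ⧸ ((K.map (MulAut.conj (t : G)).toMonoidHom).subgroupOf H)) → G ⧸ K :=
    fun p => dcPsi H K (p.1 : G) p.2
  have hψ_smul : ∀ (h : H) (t : T)
      (y : H ⧸ ((K.map (MulAut.conj (t : G)).toMonoidHom).subgroupOf H)),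
      ψ ⟨t, h • y⟩ = (h : G) • ψ ⟨t, y⟩ := fun h t y => dcPsi_smul H K _ h y
  have hψ_bij : Function.Bijective ψ := by
    constructor
    · rintro ⟨⟨t, htT⟩, y⟩ ⟨⟨t', htT'⟩, y'⟩ hp
      induction y using QuotientGroup.induction_on with
      | H a =>
        induction y' using QuotientGroup.induction_on with
        | H b =>
          simp only [ψ] at hp
          erw [dcPsi_mk, dcPsi_mk] at hp
          rw [QuotientGroup.eq] at hp
          have htt' : t = t' := by
            refine (huniq t htT t' htT' ⟨(b : G)⁻¹ * a, H.mul_mem (H.inv_mem b.2) a.2,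
              ((a : G) * t)⁻¹ * (b * t'), hp, ?_⟩).symm
            group
          subst htt'
          have hmem : a⁻¹ * b ∈ (K.map (MulAut.conj (t : G)).toMonoidHom).subgroupOf H := by
            rw [show ((K.map (MulAut.conj (t : G)).toMonoidHom).subgroupOf H) = dcSt H K t from rfl,
              dcSt_mem]
            convert hp using 1
            push_cast
            group
          have h2 : (QuotientGroup.mk a :
              H ⧸ ((K.map (MulAut.conj (t : G)).toMonoidHom).subgroupOf H)) =
              QuotientGroup.mk b := (QuotientGroup.eq).2 hmem
          simp only [Sigma.mk.inj_iff, heq_eq_eq]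
          exact ⟨trivial, h2⟩
    · intro x
      induction x using QuotientGroup.induction_on with
      | H g =>
        obtain ⟨t, htT, h, hh, k, hk, hg⟩ := hcover g
        refine ⟨⟨⟨t, htT⟩, QuotientGroup.mk ⟨h, hh⟩⟩, ?_⟩
        show QuotientGroup.mk (h * t) = QuotientGroup.mk g
        rw [QuotientGroup.eq]
        rw [hg]
        convert hk using 1
        group
  let φ : (Σ t : T,
      H ⧸ ((K.map (MulAut.conj (t : G)).toMonoidHom).subgroupOf H)) ≃ G ⧸ K :=
    Equiv.ofBijective ψ hψ_bij
  let e : (G ⧸ K →₀ R) ≃ₗ[R]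
      (⨁ t : T, (H ⧸ ((K.map (MulAut.conj (t : G)).toMonoidHom).subgroupOf H) →₀ R)) :=
    (Finsupp.domLCongr φ.symm).trans (sigmaFinsuppLequivDFinsupp R)
  have he : ∀ (v : G ⧸ K →₀ R) (t : T)
      (a : H ⧸ ((K.map (MulAut.conj (t : G)).toMonoidHom).subgroupOf H)),
      e v t a = v (ψ ⟨t, a⟩) := by
    intro v t a
    show Finsupp.split ((Finsupp.domLCongr φ.symm : _ ≃ₗ[R] _) v) t a = _
    rw [Finsupp.split_apply]
    show Finsupp.equivMapDomain φ.symm v ⟨t, a⟩ = _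
    rw [Finsupp.equivMapDomain_apply]
    simp [φ]
    rfl
  refine ⟨e, ?_⟩
  intro h v t
  ext a
  calc e (Finsupp.mapDomain (fun x => (h : G) • x) v) t a
      = Finsupp.mapDomain (fun x => (h : G) • x) v (ψ ⟨t, a⟩) := he _ _ _
    _ = v ((h : G)⁻¹ • ψ ⟨t, a⟩) := mapDomain_smul_apply _ _ _
    _ = v (ψ ⟨t, h⁻¹ • a⟩) := by rw [hψ_smul h⁻¹ t a]; norm_cast
    _ = e v t (h⁻¹ • a) := (he _ _ _).symm
    _ = Finsupp.mapDomain (fun y => h • y) (e v t) a :=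
        (mapDomain_smul_apply h (e v t) a).symm
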